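/- Let K be the simplicial complex on {1,…,8} from Construction 3.1 (with the eighteen maximal 3-simplices listed). For the subset I = (1,2,3,4), the full subcomplex K_I has missing faces exactly {(1,2,3), (1,3,4)}, and its geometric realization is homotopy equivalent to the circle S¹; in particular H̃¹(K_I; ℤ) ≅ ℤ and H̃⁰(K_I; ℤ) = 0. -/

import Mathlib

namespace Paper

/-- A finite abstract simplicial complex on an ambient type `V`, with a specified
vertex set, containing the empty face and closed under passing to subsets. -/
structure SComplex (V : Type*) where
  vertexSet : Finset V
  faces : Set (Finset V)
  empty_mem : ∅ ∈ faces
  face_sub : ∀ {s : Finset V}, s ∈ faces → s ⊆ vertexSet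
  down_closed : ∀ {s t : Finset V}, s ∈ faces → t ⊆ s → t ∈ faces

namespace SComplex

variable {V : Type*}

/-- The set of missing faces (minimal non-faces) of `K`. -/
def MF (K : SComplex V) : Set (Finset V) :=
  {σ | σ ⊆ K.vertexSet ∧ σ ∉ K.faces ∧ ∀ t ⊂ σ, t ∈ K.faces}

/-- The full subcomplex on a vertex subset `I`. -/
def full (K : SComplex V) (I : Finset V) : SComplex V where
  vertexSet := I
  faces := {s | s ∈ K.faces ∧ s ⊆ I}
  empty_mem := ⟨K.empty_mem, Finset.empty_subset I⟩
  face_sub := fun hs => hs.2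
  down_closed := fun hs hts => ⟨K.down_closed hs.1 hts, hts.trans hs.2⟩

/-- The full simplex on a vertex set `W`. -/
def fullSimplex (W : Finset V) : SComplex V where
  vertexSet := W
  faces := {s | s ⊆ W}
  empty_mem := Finset.empty_subset W
  face_sub := fun hs => hs
  down_closed := fun hs hts => hts.trans hs

/-- The join of two simplicial complexes (on disjoint vertex sets). -/
def join [DecidableEq V] (K L : SComplex V) : SComplex V where
  vertexSet := K.vertexSet ∪ L.vertexSet
  faces := {s | ∃ a ∈ K.faces, ∃ b ∈ L.faces, s = a ∪ b}
  empty_mem := ⟨∅, K.empty_mem, ∅, L.empty_mem, by rw [Finset.union_empty]⟩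
  face_sub := by
    rintro s ⟨a, ha, b, hb, rfl⟩
    exact Finset.union_subset_union (K.face_sub ha) (L.face_sub hb)
  down_closed := by
    rintro s t ⟨a, ha, b, hb, rfl⟩ hts
    refine ⟨t ∩ a, K.down_closed ha Finset.inter_subset_right,
      t ∩ b, L.down_closed hb Finset.inter_subset_right, ?_⟩
    ext x
    simp only [Finset.mem_union, Finset.mem_inter]
    constructor
    · intro hx
      rcases Finset.mem_union.1 (hts hx) with h | h
      · exact Or.inl ⟨hx, h⟩
      · exact Or.inr ⟨hx, h⟩
    · rintro (⟨h, _⟩ | ⟨h, _⟩) <;> exact h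

/-- The join of a finite family of simplicial complexes (on pairwise disjoint
vertex sets). -/
def multiJoin {ι : Type*} [Fintype ι] [DecidableEq V] (K : ι → SComplex V) : SComplex V where
  vertexSet := Finset.univ.sup fun i => (K i).vertexSet
  faces := {s | ∃ t : ι → Finset V, (∀ i, t i ∈ (K i).faces) ∧ s = Finset.univ.sup t}
  empty_mem := ⟨fun _ => ∅, fun i => (K i).empty_mem, by ext x; simp [Finset.mem_sup]⟩
  face_sub := by
    rintro s ⟨t, ht, rfl⟩
    exact Finset.sup_mono_fun fun i _ => (K i).face_sub (ht i)
  down_closed := by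
    rintro s u ⟨t, ht, rfl⟩ hus
    refine ⟨fun i => u ∩ t i, fun i => (K i).down_closed (ht i) Finset.inter_subset_right, ?_⟩
    ext x
    simp only [Finset.mem_sup, Finset.mem_inter]
    constructor
    · intro hx
      rcases Finset.mem_sup.1 (hus hx) with ⟨i, hi, hxi⟩
      exact ⟨i, hi, hx, hxi⟩
    · rintro ⟨i, _, hx, _⟩
      exact hx

/-- The geometric realization of `K`, as a subspace of `V → ℝ`. -/
def realization (K : SComplex V) : Set (V → ℝ) :=
  {f | (∀ v, 0 ≤ f v) ∧ ∃ s ∈ K.faces, (∀ v ∉ s, f v = 0) ∧ ∑ v ∈ s, f v = 1}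

/-- `Γ_I` is (isomorphic to) the boundary of a polygon on the vertex set `I`. -/
def IsPolygonBoundary [DecidableEq V] (K : SComplex V) (I : Finset V) : Prop :=
  3 ≤ I.card ∧ ∃ e : Fin I.card → V, Function.Injective e ∧ (∀ i, e i ∈ I) ∧
    ∀ s : Finset V, s ∈ (K.full I).faces ↔
      s = ∅ ∨ (∃ i, s = {e i}) ∨
        ∃ i : Fin I.card, s = {e i, e ⟨(i.1 + 1) % I.card, Nat.mod_lt _ i.pos⟩}

/-! ### Reduced simplicial chains, homology and cohomology -/

/-- The group of reduced simplicial `n`-chains: the free abelian group on the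
faces of `K` with `n + 1` vertices (`n : ℤ`; `n = -1` corresponds to the empty face). -/
abbrev chainZ (K : SComplex V) (n : ℤ) : Type _ :=
  {σ : Finset V // σ ∈ K.faces ∧ (σ.card : ℤ) = n + 1} →₀ ℤ

/-- Transporting chain groups along an equality of degrees. -/
noncomputable def chainCast (K : SComplex V) {a b : ℤ} (h : a = b) :
    K.chainZ a ≃ₗ[ℤ] K.chainZ b := by subst h; exact LinearEquiv.refl ℤ _

variable [DecidableEq V] [LinearOrder V]

/-- The boundary of a basis chain. -/
noncomputable def bdryElem (K : SComplex V) (n : ℤ)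
    (σ : {σ : Finset V // σ ∈ K.faces ∧ (σ.card : ℤ) = n + 1}) : K.chainZ (n - 1) :=
  ∑ i : Fin σ.1.card,
    ((-1 : ℤ) ^ (i : ℕ)) •
      Finsupp.single
        ⟨σ.1.erase ((σ.1.sort (· ≤ ·)).get (Fin.cast (Finset.length_sort (· ≤ ·)).symm i)), by
          refine ⟨K.down_closed σ.2.1 (Finset.erase_subset _ _), ?_⟩
          have hm : (σ.1.sort (· ≤ ·)).get (Fin.cast (Finset.length_sort (· ≤ ·)).symm i) ∈ σ.1 :=
            (Finset.mem_sort (· ≤ ·)).1 (List.get_mem _ _)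
          rw [Finset.card_erase_of_mem hm]
          have h1 : 0 < σ.1.card := i.pos
          have h2 := σ.2.2
          omega⟩ 1

/-- The simplicial boundary operator on reduced chains. -/
noncomputable def bdry (K : SComplex V) (n : ℤ) : K.chainZ n →ₗ[ℤ] K.chainZ (n - 1) :=
  Finsupp.lsum ℤ fun σ => LinearMap.toSpanSingleton ℤ _ (K.bdryElem n σ)

/-- Reduced `n`-cycles. -/
noncomputable def cycles (K : SComplex V) (n : ℤ) : Submodule ℤ (K.chainZ n) :=
  LinearMap.ker (K.bdry n)

/-- Reduced `n`-boundaries. -/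
noncomputable def bdries (K : SComplex V) (n : ℤ) : Submodule ℤ (K.chainZ n) :=
  (LinearMap.range (K.bdry (n + 1))).map (K.chainCast (by ring)).toLinearMap

/-- The `n`-th reduced simplicial homology group of `K` with `ℤ` coefficients. -/
noncomputable abbrev reducedHomology (K : SComplex V) (n : ℤ) :=
  K.cycles n ⧸ Submodule.comap (K.cycles n).subtype (K.bdries n ⊓ K.cycles n)

/-- The simplicial coboundary operator on reduced cochains. -/
noncomputable def cobdry (K : SComplex V) (n : ℤ) :
    (K.chainZ n →ₗ[ℤ] ℤ) →ₗ[ℤ] (K.chainZ (n + 1) →ₗ[ℤ] ℤ) :=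
  LinearMap.lcomp ℤ ℤ ((K.chainCast (show n + 1 - 1 = n by ring)).toLinearMap.comp (K.bdry (n + 1)))

/-- Reduced `n`-cocycles. -/
noncomputable def cocycles (K : SComplex V) (n : ℤ) : Submodule ℤ (K.chainZ n →ₗ[ℤ] ℤ) :=
  LinearMap.ker (K.cobdry n)

/-- Reduced `n`-coboundaries. -/
noncomputable def cobdries (K : SComplex V) (n : ℤ) : Submodule ℤ (K.chainZ n →ₗ[ℤ] ℤ) :=
  (LinearMap.range (K.cobdry (n - 1))).map
    ((LinearEquiv.arrowCongr (K.chainCast (show n - 1 + 1 = n by ring))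
      (LinearEquiv.refl ℤ ℤ)).toLinearMap)

/-- The `n`-th reduced simplicial cohomology group of `K` with `ℤ` coefficients. -/
noncomputable abbrev reducedCohomology (K : SComplex V) (n : ℤ) :=
  K.cocycles n ⧸ Submodule.comap (K.cocycles n).subtype (K.cobdries n ⊓ K.cocycles n)

/-- The inclusion of the chains of a full subcomplex into the chains of `K`. -/
noncomputable def chainIncl (K : SComplex V) (I : Finset V) (n : ℤ) :
    (K.full I).chainZ n →ₗ[ℤ] K.chainZ n :=
  Finsupp.lsum ℤ fun σ => LinearMap.toSpanSingleton ℤ _ (Finsupp.single ⟨σ.1, σ.2.1.1, σ.2.2⟩ 1)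

/-- Restriction of cochains of `K` to cochains of a full subcomplex. -/
noncomputable def cochainRestrict (K : SComplex V) (I : Finset V) (n : ℤ) :
    (K.chainZ n →ₗ[ℤ] ℤ) →ₗ[ℤ] ((K.full I).chainZ n →ₗ[ℤ] ℤ) :=
  LinearMap.lcomp ℤ ℤ (K.chainIncl I n)

/-- The oriented edge chain corresponding to an edge `{a, b}` (oriented from `a` to `b`). -/
noncomputable def edgeChain (K : SComplex V) (a b : V) (hab : a ≠ b)
    (h : ({a, b} : Finset V) ∈ K.faces) : K.chainZ 1 :=
  (if a ≤ b then (1 : ℤ) else -1) •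
    Finsupp.single ⟨{a, b}, h, by
      rw [Finset.card_insert_of_notMem (by simp [hab]), Finset.card_singleton]; norm_num⟩ 1

end SComplex

end Paper

/-- The eighteen maximal 3-simplices of the polytopal 3-sphere from Construction 3.1. -/
def tetraList : Finset (Finset ℕ) :=
  {{1,2,4,5},{1,2,4,6},{1,2,5,7},{1,2,6,7},{1,3,5,7},{1,3,6,7},{2,3,4,7},{2,3,6,7},
   {2,4,5,7},{3,4,5,7},{1,4,5,8},{1,4,6,8},{1,3,5,8},{1,3,6,8},{2,3,4,8},{2,3,6,8},
   {2,4,6,8},{3,4,5,8}}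

/-- The polytopal 3-sphere `K` of Construction 3.1, on vertex set `{1, ..., 8}`. -/
def Kpaper : Paper.SComplex ℕ where
  vertexSet := {1,2,3,4,5,6,7,8}
  faces := {s | ∃ t ∈ tetraList, s ⊆ t}
  empty_mem := ⟨{1,2,4,5}, by decide, by simp⟩
  face_sub := by
    rintro s ⟨t, ht, hst⟩
    have h : ∀ t ∈ tetraList, t ⊆ ({1,2,3,4,5,6,7,8} : Finset ℕ) := by decide
    exact hst.trans (h t ht)
  down_closed := by
    rintro s u ⟨t, ht, hst⟩ hus
    exact ⟨t, ht, hus.trans hst⟩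

open Paper Paper.SComplex

noncomputable section StmtNine

abbrev L : SComplex ℕ := Kpaper.full {1,2,3,4}

def facesL : Finset (Finset ℕ) :=
  {∅,{1},{2},{3},{4},{1,2},{1,3},{1,4},{2,3},{2,4},{3,4},{1,2,4},{2,3,4}}

lemma faces_full_iff (s : Finset ℕ) : s ∈ L.faces ↔ s ∈ facesL := by
  constructor
  · rintro ⟨⟨t, ht, hst⟩, hsI⟩
    have key : ∀ s ∈ ({1,2,3,4} : Finset ℕ).powerset,
        (∃ t ∈ tetraList, s ⊆ t) → s ∈ facesL := by decide
    exact key s (Finset.mem_powerset.2 hsI) ⟨t, ht, hst⟩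
  · intro hs
    have key : ∀ s ∈ facesL, (∃ t ∈ tetraList, s ⊆ t) ∧ s ⊆ ({1,2,3,4} : Finset ℕ) := by decide
    exact ⟨(key s hs).1, (key s hs).2⟩

lemma memF {s : Finset ℕ} (hf : s ∈ facesL) : s ∈ L.faces := (faces_full_iff s).2 hf

lemma mf_full : L.MF = ({{1,2,3},{1,3,4}} : Set (Finset ℕ)) := by
  ext σ
  simp only [Paper.SComplex.MF, Set.mem_setOf_eq, Set.mem_insert_iff, Set.mem_singleton_iff]
  constructor
  · rintro ⟨h1, h2, h3⟩
    have h1' : σ ∈ ({1,2,3,4} : Finset ℕ).powerset := Finset.mem_powerset.2 h1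
    have h2' : σ ∉ facesL := fun h => h2 (memF h)
    have h3' : ∀ t ∈ σ.powerset, t ≠ σ → t ∈ facesL := by
      intro t ht hne
      exact (faces_full_iff t).1 (h3 t ⟨Finset.mem_powerset.1 ht,
        fun h => hne (Finset.Subset.antisymm (Finset.mem_powerset.1 ht) h)⟩)
    revert h2' h3'
    have key : ∀ σ ∈ ({1,2,3,4} : Finset ℕ).powerset,
        σ ∉ facesL → (∀ t ∈ σ.powerset, t ≠ σ → t ∈ facesL) →
          σ = {1,2,3} ∨ σ = {1,3,4} := by decide
    exact key σ h1'
  · rintro (rfl | rfl) <;>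
    refine ⟨by decide, fun h => ?_, fun t ht => memF ?_⟩
    · exact absurd ((faces_full_iff _).1 h) (by decide)
    · have key : ∀ t ∈ ({1,2,3}:Finset ℕ).powerset, t ≠ {1,2,3} → t ∈ facesL := by decide
      exact key t (Finset.mem_powerset.2 ht.subset) (ne_of_ssubset ht)
    · exact absurd ((faces_full_iff _).1 h) (by decide)
    · have key : ∀ t ∈ ({1,3,4}:Finset ℕ).powerset, t ≠ {1,3,4} → t ∈ facesL := by decide
      exact key t (Finset.mem_powerset.2 ht.subset) (ne_of_ssubset ht)

/-! ### chain generators and boundary evaluations -/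

def sgl (n : ℤ) (s : Finset ℕ) (hf : s ∈ facesL := by decide)
    (hc : (s.card : ℤ) = n + 1 := by decide) : L.chainZ n :=
  Finsupp.single ⟨s, memF hf, hc⟩ 1

lemma bdry_single (n : ℤ) (x : {σ : Finset ℕ // σ ∈ L.faces ∧ (σ.card : ℤ) = n + 1}) :
    L.bdry n (Finsupp.single x 1) = L.bdryElem n x := by
  simp [SComplex.bdry]

lemma sort124 : ({1,2,4}:Finset ℕ).sort (·≤·) = [1,2,4] := by
  rw [show ({1,2,4}:Finset ℕ) = [1,2,4].toFinset by decide, List.toFinset_sort] <;> decide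
lemma sort234 : ({2,3,4}:Finset ℕ).sort (·≤·) = [2,3,4] := by
  rw [show ({2,3,4}:Finset ℕ) = [2,3,4].toFinset by decide, List.toFinset_sort] <;> decide

lemma eB124 (h : ({1,2,4}:Finset ℕ) ∈ L.faces ∧ ((({1,2,4}:Finset ℕ).card : ℤ) = 2 + 1)) :
    L.bdryElem 2 ⟨{1,2,4}, h⟩ = sgl 1 {2,4} - sgl 1 {1,4} + sgl 1 {1,2} := by
  simp only [SComplex.bdryElem, List.get_eq_getElem, Fin.coe_cast, sort124]
  refine Eq.trans (Fin.sum_univ_three _) ?_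
  norm_num [show ({1,2,4}:Finset ℕ).erase 1 = {2,4} by decide,
    show ({1,2,4}:Finset ℕ).erase 2 = {1,4} by decide,
    show ({1,2,4}:Finset ℕ).erase 4 = {1,2} by decide, sgl]
  abel

lemma eB234 (h : ({2,3,4}:Finset ℕ) ∈ L.faces ∧ ((({2,3,4}:Finset ℕ).card : ℤ) = 2 + 1)) :
    L.bdryElem 2 ⟨{2,3,4}, h⟩ = sgl 1 {3,4} - sgl 1 {2,4} + sgl 1 {2,3} := by
  simp only [SComplex.bdryElem, List.get_eq_getElem, Fin.coe_cast, sort234]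
  refine Eq.trans (Fin.sum_univ_three _) ?_
  norm_num [show ({2,3,4}:Finset ℕ).erase 2 = {3,4} by decide,
    show ({2,3,4}:Finset ℕ).erase 3 = {2,4} by decide,
    show ({2,3,4}:Finset ℕ).erase 4 = {2,3} by decide, sgl]
  abel

lemma sort12 : ({1,2}:Finset ℕ).sort (·≤·) = [1,2] := by
  rw [show ({1,2}:Finset ℕ) = [1,2].toFinset by decide, List.toFinset_sort] <;> decide

lemma eB12 (h : ({1,2}:Finset ℕ) ∈ L.faces ∧ ((({1,2}:Finset ℕ).card : ℤ) = 1 + 1)) :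
    L.bdryElem 1 ⟨{1,2}, h⟩ = sgl 0 {2} - sgl 0 {1} := by
  simp only [SComplex.bdryElem, List.get_eq_getElem, Fin.coe_cast, sort12]
  refine Eq.trans (Fin.sum_univ_two _) ?_
  norm_num [show ({1,2}:Finset ℕ).erase 1 = {2} by decide,
    show ({1,2}:Finset ℕ).erase 2 = {1} by decide, sgl]
  abel

lemma sort13 : ({1,3}:Finset ℕ).sort (·≤·) = [1,3] := by
  rw [show ({1,3}:Finset ℕ) = [1,3].toFinset by decide, List.toFinset_sort] <;> decide

lemma eB13 (h : ({1,3}:Finset ℕ) ∈ L.faces ∧ ((({1,3}:Finset ℕ).card : ℤ) = 1 + 1)) :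
    L.bdryElem 1 ⟨{1,3}, h⟩ = sgl 0 {3} - sgl 0 {1} := by
  simp only [SComplex.bdryElem, List.get_eq_getElem, Fin.coe_cast, sort13]
  refine Eq.trans (Fin.sum_univ_two _) ?_
  norm_num [show ({1,3}:Finset ℕ).erase 1 = {3} by decide,
    show ({1,3}:Finset ℕ).erase 3 = {1} by decide, sgl]
  abel

lemma sort14 : ({1,4}:Finset ℕ).sort (·≤·) = [1,4] := by
  rw [show ({1,4}:Finset ℕ) = [1,4].toFinset by decide, List.toFinset_sort] <;> decide

lemma eB14 (h : ({1,4}:Finset ℕ) ∈ L.faces ∧ ((({1,4}:Finset ℕ).card : ℤ) = 1 + 1)) :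
    L.bdryElem 1 ⟨{1,4}, h⟩ = sgl 0 {4} - sgl 0 {1} := by
  simp only [SComplex.bdryElem, List.get_eq_getElem, Fin.coe_cast, sort14]
  refine Eq.trans (Fin.sum_univ_two _) ?_
  norm_num [show ({1,4}:Finset ℕ).erase 1 = {4} by decide,
    show ({1,4}:Finset ℕ).erase 4 = {1} by decide, sgl]
  abel

lemma sort23 : ({2,3}:Finset ℕ).sort (·≤·) = [2,3] := by
  rw [show ({2,3}:Finset ℕ) = [2,3].toFinset by decide, List.toFinset_sort] <;> decide

lemma eB23 (h : ({2,3}:Finset ℕ) ∈ L.faces ∧ ((({2,3}:Finset ℕ).card : ℤ) = 1 + 1)) :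
    L.bdryElem 1 ⟨{2,3}, h⟩ = sgl 0 {3} - sgl 0 {2} := by
  simp only [SComplex.bdryElem, List.get_eq_getElem, Fin.coe_cast, sort23]
  refine Eq.trans (Fin.sum_univ_two _) ?_
  norm_num [show ({2,3}:Finset ℕ).erase 2 = {3} by decide,
    show ({2,3}:Finset ℕ).erase 3 = {2} by decide, sgl]
  abel

lemma sort24 : ({2,4}:Finset ℕ).sort (·≤·) = [2,4] := by
  rw [show ({2,4}:Finset ℕ) = [2,4].toFinset by decide, List.toFinset_sort] <;> decide

lemma eB24 (h : ({2,4}:Finset ℕ) ∈ L.faces ∧ ((({2,4}:Finset ℕ).card : ℤ) = 1 + 1)) :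
    L.bdryElem 1 ⟨{2,4}, h⟩ = sgl 0 {4} - sgl 0 {2} := by
  simp only [SComplex.bdryElem, List.get_eq_getElem, Fin.coe_cast, sort24]
  refine Eq.trans (Fin.sum_univ_two _) ?_
  norm_num [show ({2,4}:Finset ℕ).erase 2 = {4} by decide,
    show ({2,4}:Finset ℕ).erase 4 = {2} by decide, sgl]
  abel

lemma sort34 : ({3,4}:Finset ℕ).sort (·≤·) = [3,4] := by
  rw [show ({3,4}:Finset ℕ) = [3,4].toFinset by decide, List.toFinset_sort] <;> decide

lemma eB34 (h : ({3,4}:Finset ℕ) ∈ L.faces ∧ ((({3,4}:Finset ℕ).card : ℤ) = 1 + 1)) :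
    L.bdryElem 1 ⟨{3,4}, h⟩ = sgl 0 {4} - sgl 0 {3} := by
  simp only [SComplex.bdryElem, List.get_eq_getElem, Fin.coe_cast, sort34]
  refine Eq.trans (Fin.sum_univ_two _) ?_
  norm_num [show ({3,4}:Finset ℕ).erase 3 = {4} by decide,
    show ({3,4}:Finset ℕ).erase 4 = {3} by decide, sgl]
  abel

lemma eBv1 (h : ({1}:Finset ℕ) ∈ L.faces ∧ ((({1}:Finset ℕ).card : ℤ) = 0 + 1)) :
    L.bdryElem 0 ⟨{1}, h⟩ = sgl (-1) ∅ := by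
  simp only [SComplex.bdryElem, List.get_eq_getElem, Fin.coe_cast,
    show ({1}:Finset ℕ).sort (·≤·) = [1] by
      rw [show ({1}:Finset ℕ) = [1].toFinset by decide, List.toFinset_sort] <;> decide]
  refine Eq.trans (Fin.sum_univ_one _) ?_
  norm_num [show ({1}:Finset ℕ).erase 1 = ∅ by decide, sgl]

lemma eBv2 (h : ({2}:Finset ℕ) ∈ L.faces ∧ ((({2}:Finset ℕ).card : ℤ) = 0 + 1)) :
    L.bdryElem 0 ⟨{2}, h⟩ = sgl (-1) ∅ := by
  simp only [SComplex.bdryElem, List.get_eq_getElem, Fin.coe_cast,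
    show ({2}:Finset ℕ).sort (·≤·) = [2] by
      rw [show ({2}:Finset ℕ) = [2].toFinset by decide, List.toFinset_sort] <;> decide]
  refine Eq.trans (Fin.sum_univ_one _) ?_
  norm_num [show ({2}:Finset ℕ).erase 2 = ∅ by decide, sgl]

lemma eBv3 (h : ({3}:Finset ℕ) ∈ L.faces ∧ ((({3}:Finset ℕ).card : ℤ) = 0 + 1)) :
    L.bdryElem 0 ⟨{3}, h⟩ = sgl (-1) ∅ := by
  simp only [SComplex.bdryElem, List.get_eq_getElem, Fin.coe_cast,
    show ({3}:Finset ℕ).sort (·≤·) = [3] by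
      rw [show ({3}:Finset ℕ) = [3].toFinset by decide, List.toFinset_sort] <;> decide]
  refine Eq.trans (Fin.sum_univ_one _) ?_
  norm_num [show ({3}:Finset ℕ).erase 3 = ∅ by decide, sgl]

lemma eBv4 (h : ({4}:Finset ℕ) ∈ L.faces ∧ ((({4}:Finset ℕ).card : ℤ) = 0 + 1)) :
    L.bdryElem 0 ⟨{4}, h⟩ = sgl (-1) ∅ := by
  simp only [SComplex.bdryElem, List.get_eq_getElem, Fin.coe_cast,
    show ({4}:Finset ℕ).sort (·≤·) = [4] by
      rw [show ({4}:Finset ℕ) = [4].toFinset by decide, List.toFinset_sort] <;> decide]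
  refine Eq.trans (Fin.sum_univ_one _) ?_
  norm_num [show ({4}:Finset ℕ).erase 4 = ∅ by decide, sgl]

/-! ### classification of faces by cardinality -/

lemma classify0 (x : {σ : Finset ℕ // σ ∈ L.faces ∧ (σ.card : ℤ) = 0 + 1}) :
    x.1 = {1} ∨ x.1 = {2} ∨ x.1 = {3} ∨ x.1 = {4} := by
  have key : ∀ s ∈ facesL, (s.card : ℤ) = 0 + 1 → s = {1} ∨ s = {2} ∨ s = {3} ∨ s = {4} := by
    decide
  exact key x.1 ((faces_full_iff x.1).1 x.2.1) x.2.2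

lemma classify1 (x : {σ : Finset ℕ // σ ∈ L.faces ∧ (σ.card : ℤ) = 1 + 1}) :
    x.1 = {1,2} ∨ x.1 = {1,3} ∨ x.1 = {1,4} ∨ x.1 = {2,3} ∨ x.1 = {2,4} ∨ x.1 = {3,4} := by
  have key : ∀ s ∈ facesL, (s.card : ℤ) = 1 + 1 →
      s = {1,2} ∨ s = {1,3} ∨ s = {1,4} ∨ s = {2,3} ∨ s = {2,4} ∨ s = {3,4} := by decide
  exact key x.1 ((faces_full_iff x.1).1 x.2.1) x.2.2

lemma classify2 (x : {σ : Finset ℕ // σ ∈ L.faces ∧ (σ.card : ℤ) = 2 + 1}) :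
    x.1 = {1,2,4} ∨ x.1 = {2,3,4} := by
  have key : ∀ s ∈ facesL, (s.card : ℤ) = 2 + 1 → s = {1,2,4} ∨ s = {2,3,4} := by decide
  exact key x.1 ((faces_full_iff x.1).1 x.2.1) x.2.2

/-! ### unfolding the coboundary operators at concrete degrees -/

lemma cocyc_apply2 (φ : L.chainZ 1 →ₗ[ℤ] ℤ) (x : {σ : Finset ℕ // σ ∈ L.faces ∧ (σ.card : ℤ) = 2 + 1}) :
    L.cobdry 1 φ (Finsupp.single x 1) = φ (L.bdryElem 2 x) := by
  have h : L.cobdry 1 φ (Finsupp.single x 1) = φ (L.bdry (1+1) (Finsupp.single x 1)) := rfl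
  rw [h, bdry_single]; rfl

lemma cocyc_apply1 (φ : L.chainZ 0 →ₗ[ℤ] ℤ) (x : {σ : Finset ℕ // σ ∈ L.faces ∧ (σ.card : ℤ) = 1 + 1}) :
    L.cobdry 0 φ (Finsupp.single x 1) = φ (L.bdryElem 1 x) := by
  have h : L.cobdry 0 φ (Finsupp.single x 1) = φ (L.bdry (0+1) (Finsupp.single x 1)) := rfl
  rw [h, bdry_single]; rfl

lemma arrow_apply0 (ψ : L.chainZ ((0:ℤ)-1) →ₗ[ℤ] ℤ)
    (x : {σ : Finset ℕ // σ ∈ L.faces ∧ (σ.card : ℤ) = 0 + 1}) :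
    ((LinearEquiv.arrowCongr (L.chainCast (show (0:ℤ)-1+1 = 0 by ring)) (LinearEquiv.refl ℤ ℤ))
      ((L.cobdry (0-1)) ψ)) (Finsupp.single x 1) = ψ (L.bdryElem 0 x) := by
  have h : ((LinearEquiv.arrowCongr (L.chainCast (show (0:ℤ)-1+1 = 0 by ring)) (LinearEquiv.refl ℤ ℤ))
      ((L.cobdry (0-1)) ψ)) (Finsupp.single x 1) = ψ (L.bdry (0-1+1) (Finsupp.single x 1)) := rfl
  rw [h, bdry_single]; rfl

lemma arrow_apply1 (ψ : L.chainZ ((1:ℤ)-1) →ₗ[ℤ] ℤ)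
    (x : {σ : Finset ℕ // σ ∈ L.faces ∧ (σ.card : ℤ) = 1 + 1}) :
    ((LinearEquiv.arrowCongr (L.chainCast (show (1:ℤ)-1+1 = 1 by ring)) (LinearEquiv.refl ℤ ℤ))
      ((L.cobdry (1-1)) ψ)) (Finsupp.single x 1) = ψ (L.bdryElem 1 x) := by
  have h : ((LinearEquiv.arrowCongr (L.chainCast (show (1:ℤ)-1+1 = 1 by ring)) (LinearEquiv.refl ℤ ℤ))
      ((L.cobdry (1-1)) ψ)) (Finsupp.single x 1) = ψ (L.bdry (1-1+1) (Finsupp.single x 1)) := rfl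
  rw [h, bdry_single]; rfl

lemma lhom_ext1 {n : ℤ} {φ ψ : L.chainZ n →ₗ[ℤ] ℤ}
    (h : ∀ a, φ (Finsupp.single a 1) = ψ (Finsupp.single a 1)) : φ = ψ := by
  refine Finsupp.lhom_ext fun a b => ?_
  have hb : (Finsupp.single a b) = b • Finsupp.single a (1:ℤ) := by
    rw [Finsupp.smul_single, smul_eq_mul, mul_one]
  rw [hb, map_smul, map_smul, h]

/-! ### H^0 is trivial -/

theorem coh0 : Subsingleton (L.reducedCohomology 0) := by
  rw [Submodule.Quotient.subsingleton_iff, Submodule.eq_top_iff']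
  rintro ⟨φ, hφ⟩
  have hφ' : L.cobdry 0 φ = 0 := hφ
  have rel : ∀ (x : {σ : Finset ℕ // σ ∈ L.faces ∧ (σ.card : ℤ) = 1 + 1}),
      φ (L.bdryElem 1 x) = 0 := by
    intro x
    rw [← cocyc_apply1, hφ']
    rfl
  have v2 : φ (sgl 0 {2}) = φ (sgl 0 {1}) := by
    have := rel ⟨{1,2}, memF (by decide), by decide⟩
    rw [eB12, map_sub] at this
    exact sub_eq_zero.mp this
  have v3 : φ (sgl 0 {3}) = φ (sgl 0 {1}) := by
    have := rel ⟨{1,3}, memF (by decide), by decide⟩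
    rw [eB13, map_sub] at this
    exact sub_eq_zero.mp this
  have v4 : φ (sgl 0 {4}) = φ (sgl 0 {1}) := by
    have := rel ⟨{1,4}, memF (by decide), by decide⟩
    rw [eB14, map_sub] at this
    exact sub_eq_zero.mp this
  refine Submodule.mem_comap.2 ⟨?_, hφ⟩
  set c := φ (sgl 0 {1}) with hc
  set ψ : L.chainZ ((0:ℤ)-1) →ₗ[ℤ] ℤ :=
    Finsupp.lsum ℤ (fun _ => LinearMap.toSpanSingleton ℤ ℤ c) with hψ
  refine Submodule.mem_map.2 ⟨L.cobdry (0-1) ψ, LinearMap.mem_range.2 ⟨ψ, rfl⟩, ?_⟩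
  simp only [LinearEquiv.coe_coe]
  refine lhom_ext1 fun x => ?_
  rw [arrow_apply0]
  obtain ⟨x1, hx2⟩ := x
  obtain h|h|h|h := classify0 ⟨x1, hx2⟩ <;> simp only at h <;> subst h
  · rw [eBv1]
    simp only [hψ, sgl, Finsupp.lsum_single, LinearMap.toSpanSingleton_apply_one]
    exact hc
  · rw [eBv2]
    simp only [hψ, sgl, Finsupp.lsum_single, LinearMap.toSpanSingleton_apply_one]
    exact v2.symm
  · rw [eBv3]
    simp only [hψ, sgl, Finsupp.lsum_single, LinearMap.toSpanSingleton_apply_one]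
    exact v3.symm
  · rw [eBv4]
    simp only [hψ, sgl, Finsupp.lsum_single, LinearMap.toSpanSingleton_apply_one]
    exact v4.symm

/-! ### H^1 ≃ ℤ -/

def zc : L.chainZ 1 := sgl 1 {1,2} + sgl 1 {2,3} - sgl 1 {1,3}

def Emap : ↥(L.cocycles 1) →ₗ[ℤ] ℤ := (LinearMap.applyₗ zc).comp (L.cocycles 1).subtype

lemma Emap_apply (φ : ↥(L.cocycles 1)) : Emap φ = φ.1 zc := rfl

lemma rel124 {φ : L.chainZ 1 →ₗ[ℤ] ℤ} (hφ : φ ∈ L.cocycles 1) :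
    φ (sgl 1 {2,4}) - φ (sgl 1 {1,4}) + φ (sgl 1 {1,2}) = 0 := by
  have hφ' : L.cobdry 1 φ = 0 := hφ
  have h := cocyc_apply2 φ ⟨{1,2,4}, memF (by decide), by decide⟩
  rw [hφ'] at h
  simp only [LinearMap.zero_apply] at h
  rw [eB124, map_add, map_sub] at h
  exact h.symm

lemma rel234 {φ : L.chainZ 1 →ₗ[ℤ] ℤ} (hφ : φ ∈ L.cocycles 1) :
    φ (sgl 1 {3,4}) - φ (sgl 1 {2,4}) + φ (sgl 1 {2,3}) = 0 := by
  have hφ' : L.cobdry 1 φ = 0 := hφ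
  have h := cocyc_apply2 φ ⟨{2,3,4}, memF (by decide), by decide⟩
  rw [hφ'] at h
  simp only [LinearMap.zero_apply] at h
  rw [eB234, map_add, map_sub] at h
  exact h.symm

def φ0 : L.chainZ 1 →ₗ[ℤ] ℤ :=
  -(Finsupp.lapply (R := ℤ) ⟨{1,3}, memF (by decide), by decide⟩)

lemma φ0_sgl (s : Finset ℕ) (hf : s ∈ facesL) (hc : ((s.card : ℤ) = 1 + 1)) :
    φ0 (sgl 1 s hf hc) = if s = {1,3} then -1 else 0 := by
  simp only [φ0, sgl, LinearMap.neg_apply, Finsupp.lapply_apply, Finsupp.single_apply,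
    Subtype.mk.injEq]
  split_ifs with h <;> simp

lemma φ0_mem : φ0 ∈ L.cocycles 1 := by
  show L.cobdry 1 φ0 = 0
  refine lhom_ext1 fun a => ?_
  have h1 := cocyc_apply2 φ0 a
  have h2 : φ0 (L.bdryElem 2 a) = 0 := by
    obtain h | h := classify2 a <;> obtain ⟨a1, ha⟩ := a <;> simp only at h <;> subst h
    · rw [eB124, map_add, map_sub, φ0_sgl, φ0_sgl, φ0_sgl] <;> decide
    · rw [eB234, map_add, map_sub, φ0_sgl, φ0_sgl, φ0_sgl] <;> decide
  exact h1.trans h2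

lemma Emap_φ0 : Emap ⟨φ0, φ0_mem⟩ = 1 := by
  rw [Emap_apply]
  show φ0 zc = 1
  rw [zc, map_sub, map_add, φ0_sgl, φ0_sgl, φ0_sgl] <;> decide

lemma hsurj : Function.Surjective Emap := by
  intro n
  refine ⟨n • ⟨φ0, φ0_mem⟩, ?_⟩
  rw [map_smul, Emap_φ0, smul_eq_mul, mul_one]

lemma hker : Submodule.comap (L.cocycles 1).subtype (L.cobdries 1 ⊓ L.cocycles 1) =
    LinearMap.ker Emap := by
  ext φ
  simp only [Submodule.mem_comap, Submodule.mem_inf, LinearMap.mem_ker, Submodule.coe_subtype]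
  constructor
  · rintro ⟨hb, -⟩
    obtain ⟨y, hy, heq⟩ := Submodule.mem_map.1 hb
    obtain ⟨ψ, rfl⟩ := LinearMap.mem_range.1 hy
    rw [Emap_apply, ← heq]
    simp only [LinearEquiv.coe_coe]
    rw [zc, map_sub, map_add]
    rw [show (sgl 1 {1,2} : L.chainZ 1) = Finsupp.single ⟨{1,2}, memF (by decide), by decide⟩ 1 from rfl,
        show (sgl 1 {2,3} : L.chainZ 1) = Finsupp.single ⟨{2,3}, memF (by decide), by decide⟩ 1 from rfl,
        show (sgl 1 {1,3} : L.chainZ 1) = Finsupp.single ⟨{1,3}, memF (by decide), by decide⟩ 1 from rfl,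
        arrow_apply1, arrow_apply1, arrow_apply1, eB12, eB23, eB13]
    rw [map_sub, map_sub, map_sub]
    ring
  · intro hz
    rw [Emap_apply] at hz
    refine ⟨?_, φ.2⟩
    -- relations
    have r1 := rel124 φ.2
    have r2 := rel234 φ.2
    set ψ : L.chainZ ((1:ℤ)-1) →ₗ[ℤ] ℤ := Finsupp.lsum ℤ (fun x =>
      LinearMap.toSpanSingleton ℤ ℤ
        (if x.1 = {2} then φ.1 (sgl 1 {1,2}) else if x.1 = {3} then φ.1 (sgl 1 {1,3})
          else if x.1 = {4} then φ.1 (sgl 1 {1,4}) else 0)) with hψ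
    refine Submodule.mem_map.2 ⟨L.cobdry (1-1) ψ, LinearMap.mem_range.2 ⟨ψ, rfl⟩, ?_⟩
    simp only [LinearEquiv.coe_coe]
    refine lhom_ext1 fun a => ?_
    rw [arrow_apply1]
    have hz' : φ.1 (sgl 1 {1,2}) + φ.1 (sgl 1 {2,3}) - φ.1 (sgl 1 {1,3}) = 0 := by
      rw [← map_add, ← map_sub]; exact hz
    simp only [sgl] at r1 r2 hz'
    obtain h|h|h|h|h|h := classify1 a <;> obtain ⟨a1, ha⟩ := a <;> simp only at h <;> subst h
    · have hR : φ.1 (Finsupp.single ⟨{1,2}, ha⟩ 1) = φ.1 (sgl 1 {1,2}) := rfl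
      rw [eB12, map_sub, hR]
      simp only [hψ, sgl, Finsupp.lsum_single, LinearMap.toSpanSingleton_apply_one]
      norm_num
    · have hR : φ.1 (Finsupp.single ⟨{1,3}, ha⟩ 1) = φ.1 (sgl 1 {1,3}) := rfl
      rw [eB13, map_sub, hR]
      simp only [hψ, sgl, Finsupp.lsum_single, LinearMap.toSpanSingleton_apply_one]
      norm_num
    · have hR : φ.1 (Finsupp.single ⟨{1,4}, ha⟩ 1) = φ.1 (sgl 1 {1,4}) := rfl
      rw [eB14, map_sub, hR]
      simp only [hψ, sgl, Finsupp.lsum_single, LinearMap.toSpanSingleton_apply_one]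
      norm_num
    · have hR : φ.1 (Finsupp.single ⟨{2,3}, ha⟩ 1) = φ.1 (sgl 1 {2,3}) := rfl
      rw [eB23, map_sub, hR]
      simp only [hψ, sgl, Finsupp.lsum_single, LinearMap.toSpanSingleton_apply_one]
      norm_num
      linarith [hz']
    · have hR : φ.1 (Finsupp.single ⟨{2,4}, ha⟩ 1) = φ.1 (sgl 1 {2,4}) := rfl
      rw [eB24, map_sub, hR]
      simp only [hψ, sgl, Finsupp.lsum_single, LinearMap.toSpanSingleton_apply_one]
      norm_num
      linarith [r1]
    · have hR : φ.1 (Finsupp.single ⟨{3,4}, ha⟩ 1) = φ.1 (sgl 1 {3,4}) := rfl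
      rw [eB34, map_sub, hR]
      simp only [hψ, sgl, Finsupp.lsum_single, LinearMap.toSpanSingleton_apply_one]
      norm_num
      linarith [r1, r2, hz']

theorem coh1 : Nonempty (L.reducedCohomology 1 ≃ₗ[ℤ] ℤ) :=
  ⟨(Submodule.quotEquivOfEq _ _ hker).trans (LinearMap.quotKerEquivOfSurjective Emap hsurj)⟩

/-! ### geometric part: deformation retract onto the boundary of triangle 123 -/

def Cedges : Finset (Finset ℕ) := {{1,2},{2,3},{1,3}}

def Cset : Set (ℕ → ℝ) :=
  {f | (∀ v, 0 ≤ f v) ∧ ∃ s ∈ Cedges, (∀ v ∉ s, f v = 0) ∧ ∑ v ∈ s, f v = 1}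

def rmap : (ℕ → ℝ) → (ℕ → ℝ) := fun f v =>
  if v = 2 then f 2 + f 4 else if v = 4 then 0 else f v

lemma rmap_cont : Continuous rmap := by
  refine continuous_pi fun v => ?_
  by_cases h2 : v = 2
  · subst h2
    simp only [rmap, if_pos rfl]
    exact (continuous_apply 2).add (continuous_apply 4)
  by_cases h4 : v = 4
  · subst h4
    simp only [rmap, if_neg h2, if_pos rfl]
    exact continuous_const
  · simp only [rmap, if_neg h2, if_neg h4]
    exact continuous_apply v

lemma rmap_nonneg {f : ℕ → ℝ} (hf : ∀ v, 0 ≤ f v) : ∀ v, 0 ≤ rmap f v := by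
  intro v
  unfold rmap
  split_ifs
  · exact add_nonneg (hf 2) (hf 4)
  · exact le_refl 0
  · exact hf v

lemma face_cases {s : Finset ℕ} (hs : s ∈ L.faces) :
    s ⊆ {1,2,4} ∨ s ⊆ {2,3,4} ∨ s ⊆ {1,3} := by
  have key : ∀ s ∈ facesL, s ⊆ ({1,2,4}:Finset ℕ) ∨ s ⊆ {2,3,4} ∨ s ⊆ {1,3} := by decide
  exact key s ((faces_full_iff s).1 hs)

lemma sum_ext {f : ℕ → ℝ} {s t : Finset ℕ} (hst : s ⊆ t) (h0 : ∀ v ∉ s, f v = 0) :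
    ∑ v ∈ t, f v = ∑ v ∈ s, f v :=
  (Finset.sum_subset hst (fun x _ hx => h0 x hx)).symm

lemma X_struct {f : ℕ → ℝ} (hf : f ∈ L.realization) :
    (∀ v, 0 ≤ f v) ∧
    (((∀ v ∉ ({1,2,4}:Finset ℕ), f v = 0) ∧ f 1 + f 2 + f 4 = 1) ∨
     ((∀ v ∉ ({2,3,4}:Finset ℕ), f v = 0) ∧ f 2 + f 3 + f 4 = 1) ∨
     ((∀ v ∉ ({1,3}:Finset ℕ), f v = 0) ∧ f 1 + f 3 = 1)) := by
  obtain ⟨hpos, s, hs, h0, hsum⟩ := hf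
  refine ⟨hpos, ?_⟩
  obtain h|h|h := face_cases hs
  · left
    have h0' : ∀ v ∉ ({1,2,4}:Finset ℕ), f v = 0 := fun v hv => h0 v (fun hv' => hv (h hv'))
    have hs' : ∑ v ∈ ({1,2,4}:Finset ℕ), f v = 1 := by rw [sum_ext h h0]; exact hsum
    rw [Finset.sum_insert (by decide), Finset.sum_insert (by decide),
      Finset.sum_singleton] at hs'
    exact ⟨h0', by linarith⟩
  · right; left
    have h0' : ∀ v ∉ ({2,3,4}:Finset ℕ), f v = 0 := fun v hv => h0 v (fun hv' => hv (h hv'))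
    have hs' : ∑ v ∈ ({2,3,4}:Finset ℕ), f v = 1 := by rw [sum_ext h h0]; exact hsum
    rw [Finset.sum_insert (by decide), Finset.sum_insert (by decide),
      Finset.sum_singleton] at hs'
    exact ⟨h0', by linarith⟩
  · right; right
    have h0' : ∀ v ∉ ({1,3}:Finset ℕ), f v = 0 := fun v hv => h0 v (fun hv' => hv (h hv'))
    have hs' : ∑ v ∈ ({1,3}:Finset ℕ), f v = 1 := by rw [sum_ext h h0]; exact hsum
    rw [Finset.sum_insert (by decide), Finset.sum_singleton] at hs'
    exact ⟨h0', by linarith⟩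

lemma rmap_mem {f : ℕ → ℝ} (hf : f ∈ L.realization) : rmap f ∈ Cset := by
  obtain ⟨hpos, hcase⟩ := X_struct hf
  refine ⟨rmap_nonneg hpos, ?_⟩
  obtain ⟨h0, hsum⟩|⟨h0, hsum⟩|⟨h0, hsum⟩ := hcase
  · refine ⟨{1,2}, by decide, fun v hv => ?_, ?_⟩
    · simp only [Finset.mem_insert, Finset.mem_singleton, not_or] at hv
      obtain ⟨hv1, hv2⟩ := hv
      by_cases hv4 : v = 4
      · subst hv4; simp [rmap]
      · simp only [rmap, if_neg hv2, if_neg hv4]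
        refine h0 v ?_
        simp only [Finset.mem_insert, Finset.mem_singleton, not_or]
        exact ⟨hv1, hv2, hv4⟩
    · rw [Finset.sum_insert (by decide), Finset.sum_singleton]
      norm_num [rmap]
      linarith
  · refine ⟨{2,3}, by decide, fun v hv => ?_, ?_⟩
    · simp only [Finset.mem_insert, Finset.mem_singleton, not_or] at hv
      obtain ⟨hv2, hv3⟩ := hv
      by_cases hv4 : v = 4
      · subst hv4; simp [rmap]
      · simp only [rmap, if_neg hv2, if_neg hv4]
        refine h0 v ?_
        simp only [Finset.mem_insert, Finset.mem_singleton, not_or]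
        exact ⟨hv2, hv3, hv4⟩
    · rw [Finset.sum_insert (by decide), Finset.sum_singleton]
      norm_num [rmap]
      linarith
  · have h2 : f 2 = 0 := h0 2 (by decide)
    have h4 : f 4 = 0 := h0 4 (by decide)
    refine ⟨{1,3}, by decide, fun v hv => ?_, ?_⟩
    · simp only [Finset.mem_insert, Finset.mem_singleton, not_or] at hv
      obtain ⟨hv1, hv3⟩ := hv
      by_cases hv2 : v = 2
      · subst hv2; simp [rmap, h2, h4]
      by_cases hv4 : v = 4
      · subst hv4; simp [rmap]
      · simp only [rmap, if_neg hv2, if_neg hv4]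
        refine h0 v ?_
        simp only [Finset.mem_insert, Finset.mem_singleton, not_or]
        exact ⟨hv1, hv3⟩
    · rw [Finset.sum_insert (by decide), Finset.sum_singleton]
      norm_num [rmap]
      linarith

lemma C_sub_X : Cset ⊆ L.realization := by
  rintro f ⟨hpos, s, hs, h0, hsum⟩
  have hsf : s ∈ L.faces := by
    have key : ∀ s ∈ Cedges, s ∈ facesL := by decide
    exact memF (key s hs)
  exact ⟨hpos, s, hsf, h0, hsum⟩

lemma rmap_fix {f : ℕ → ℝ} (hf : f ∈ Cset) : rmap f = f := by
  obtain ⟨hpos, s, hs, h0, hsum⟩ := hf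
  have h4 : f 4 = 0 := by
    have key : ∀ s ∈ Cedges, 4 ∉ s := by decide
    exact h0 4 (key s hs)
  funext v
  by_cases h2 : v = 2
  · subst h2; simp [rmap, h4]
  by_cases hv4 : v = 4
  · subst hv4; simp [rmap, h4]
  · simp [rmap, h2, hv4]

lemma seg_mem {f : ℕ → ℝ} (hf : f ∈ L.realization) {t : ℝ} (ht0 : 0 ≤ t) (ht1 : t ≤ 1) :
    (fun v => (1 - t) * rmap f v + t * f v) ∈ L.realization := by
  obtain ⟨hpos, hcase⟩ := X_struct hf
  have hrpos := rmap_nonneg hpos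
  refine ⟨fun v => add_nonneg (mul_nonneg (by linarith) (hrpos v)) (mul_nonneg ht0 (hpos v)), ?_⟩
  obtain ⟨hs0, hsum⟩|⟨hs0, hsum⟩|⟨hs0, hsum⟩ := hcase
  · refine ⟨{1,2,4}, memF (by decide), fun v hv => ?_, ?_⟩
    · have hfv : f v = 0 := hs0 v hv
      simp only [Finset.mem_insert, Finset.mem_singleton, not_or] at hv
      obtain ⟨hv1, hv2, hv4⟩ := hv
      simp [rmap, hv2, hv4, hfv]
    · rw [Finset.sum_insert (by decide), Finset.sum_insert (by decide), Finset.sum_singleton]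
      norm_num [rmap]
      nlinarith [hsum]
  · refine ⟨{2,3,4}, memF (by decide), fun v hv => ?_, ?_⟩
    · have hfv : f v = 0 := hs0 v hv
      simp only [Finset.mem_insert, Finset.mem_singleton, not_or] at hv
      obtain ⟨hv2, hv3, hv4⟩ := hv
      simp [rmap, hv2, hv4, hfv]
    · rw [Finset.sum_insert (by decide), Finset.sum_insert (by decide), Finset.sum_singleton]
      norm_num [rmap]
      nlinarith [hsum]
  · have h2 : f 2 = 0 := hs0 2 (by decide)
    have h4 : f 4 = 0 := hs0 4 (by decide)
    refine ⟨{1,3}, memF (by decide), fun v hv => ?_, ?_⟩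
    · have hfv : f v = 0 := hs0 v hv
      simp only [Finset.mem_insert, Finset.mem_singleton, not_or] at hv
      obtain ⟨hv1, hv3⟩ := hv
      by_cases hv2 : v = 2
      · subst hv2; simp [rmap, h2, h4]
      by_cases hv4 : v = 4
      · subst hv4; simp [rmap, h4]
      · simp [rmap, hv2, hv4, hfv]
    · rw [Finset.sum_insert (by decide), Finset.sum_singleton]
      norm_num [rmap]
      nlinarith [hsum]

def retr : C(↥(L.realization), ↥Cset) :=
  ⟨fun f => ⟨rmap f.1, rmap_mem f.2⟩,
    Continuous.subtype_mk (rmap_cont.comp continuous_subtype_val) _⟩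

def incl : C(↥Cset, ↥(L.realization)) := ⟨Set.inclusion C_sub_X, continuous_inclusion _⟩

def heqA : ContinuousMap.HomotopyEquiv ↥(L.realization) ↥Cset where
  toFun := retr
  invFun := incl
  left_inv := by
    have c1 : Continuous fun p : ↥unitInterval × ↥(L.realization) => (p.1 : ℝ) :=
      continuous_subtype_val.comp continuous_fst
    have cf : Continuous fun p : ↥unitInterval × ↥(L.realization) => (p.2 : ℕ → ℝ) :=
      continuous_subtype_val.comp continuous_snd
    have c2 : Continuous fun p : ↥unitInterval × ↥(L.realization) => rmap (p.2 : ℕ → ℝ) :=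
      rmap_cont.comp cf
    have hcont : Continuous (fun p : ↥unitInterval × ↥(L.realization) =>
        (⟨fun v => (1 - (p.1 : ℝ)) * rmap p.2.1 v + (p.1 : ℝ) * p.2.1 v,
          seg_mem p.2.2 p.1.2.1 p.1.2.2⟩ : ↥(L.realization))) := by
      refine Continuous.subtype_mk (continuous_pi fun v => ?_) _
      exact ((continuous_const.sub c1).mul ((continuous_apply v).comp c2)).add
        (c1.mul ((continuous_apply v).comp cf))
    refine ⟨⟨ContinuousMap.mk _ hcont, ?_, ?_⟩⟩
    · intro f
      ext v
      simp [retr, incl, Set.inclusion]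
    · intro f
      ext v
      simp
  right_inv := by
    have h : retr.comp incl = ContinuousMap.id _ :=
      ContinuousMap.ext fun f => Subtype.ext (rmap_fix f.2)
    rw [h]

/-! ### the triangle boundary is homeomorphic to the circle -/

def sq3 : ℝ := Real.sqrt 3
lemma sq3_sq : sq3 * sq3 = 3 := Real.mul_self_sqrt (by norm_num)
lemma sq3_pos : 0 < sq3 := Real.sqrt_pos.2 (by norm_num)

def hmap (f : ℕ → ℝ) : EuclideanSpace ℝ (Fin 2) :=
  (EuclideanSpace.equiv (Fin 2) ℝ).symm ![f 1 - (f 2 + f 3)/2, (sq3/2) * (f 2 - f 3)]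

lemma hmap_0 (f : ℕ → ℝ) : hmap f 0 = f 1 - (f 2 + f 3)/2 := rfl
lemma hmap_1 (f : ℕ → ℝ) : hmap f 1 = (sq3/2) * (f 2 - f 3) := rfl

lemma norm_eq2 (x : EuclideanSpace ℝ (Fin 2)) : ‖x‖ = Real.sqrt (x 0^2 + x 1^2) := by
  rw [EuclideanSpace.norm_eq]
  rw [Fin.sum_univ_two]
  simp [Real.norm_eq_abs, sq_abs]

lemma C_props {f : ℕ → ℝ} (hf : f ∈ Cset) :
    (∀ v, 0 ≤ f v) ∧ f 1 + f 2 + f 3 = 1 ∧ (f 1 = 0 ∨ f 2 = 0 ∨ f 3 = 0) ∧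
      (∀ v ∉ ({1,2,3}:Finset ℕ), f v = 0) := by
  obtain ⟨hpos, s, hs, h0, hsum⟩ := hf
  simp only [Cedges, Finset.mem_insert, Finset.mem_singleton] at hs
  rcases hs with rfl | rfl | rfl
  · rw [Finset.sum_insert (by decide), Finset.sum_singleton] at hsum
    have h3 : f 3 = 0 := h0 3 (by decide)
    refine ⟨hpos, by linarith, Or.inr (Or.inr h3), fun v hv => h0 v ?_⟩
    simp only [Finset.mem_insert, Finset.mem_singleton, not_or] at hv ⊢
    exact ⟨hv.1, hv.2.1⟩
  · rw [Finset.sum_insert (by decide), Finset.sum_singleton] at hsum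
    have h1 : f 1 = 0 := h0 1 (by decide)
    refine ⟨hpos, by linarith, Or.inl h1, fun v hv => h0 v ?_⟩
    simp only [Finset.mem_insert, Finset.mem_singleton, not_or] at hv ⊢
    exact ⟨hv.2.1, hv.2.2⟩
  · rw [Finset.sum_insert (by decide), Finset.sum_singleton] at hsum
    have h2 : f 2 = 0 := h0 2 (by decide)
    refine ⟨hpos, by linarith, Or.inr (Or.inl h2), fun v hv => h0 v ?_⟩
    simp only [Finset.mem_insert, Finset.mem_singleton, not_or] at hv ⊢
    exact ⟨hv.1, hv.2.2⟩

lemma hmap_ne {f : ℕ → ℝ} (hf : f ∈ Cset) : hmap f ≠ 0 := by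
  obtain ⟨hpos, hsum, hz, -⟩ := C_props hf
  intro h
  have h0 : f 1 - (f 2 + f 3)/2 = 0 := by rw [← hmap_0, h]; rfl
  have h1 : (sq3/2) * (f 2 - f 3) = 0 := by rw [← hmap_1, h]; rfl
  have h23 : f 2 = f 3 := by
    rcases mul_eq_zero.1 h1 with h | h
    · have := sq3_pos; linarith
    · linarith
  rcases hz with h | h | h <;> linarith

lemma hmap_norm_pos {f : ℕ → ℝ} (hf : f ∈ Cset) : 0 < ‖hmap f‖ :=
  norm_pos_iff.2 (hmap_ne hf)

noncomputable def Fmap0 (f : ℕ → ℝ) : EuclideanSpace ℝ (Fin 2) := ‖hmap f‖⁻¹ • hmap f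

lemma Fmap0_mem {f : ℕ → ℝ} (hf : f ∈ Cset) :
    Fmap0 f ∈ Metric.sphere (0 : EuclideanSpace ℝ (Fin 2)) 1 := by
  rw [mem_sphere_zero_iff_norm, Fmap0, norm_smul, Real.norm_eq_abs,
    abs_of_pos (inv_pos.2 (hmap_norm_pos hf))]
  exact inv_mul_cancel₀ (hmap_norm_pos hf).ne'

def a1 (u : EuclideanSpace ℝ (Fin 2)) : ℝ := u 0
def a2 (u : EuclideanSpace ℝ (Fin 2)) : ℝ := -(u 0)/2 + (sq3/2) * u 1
def a3 (u : EuclideanSpace ℝ (Fin 2)) : ℝ := -(u 0)/2 - (sq3/2) * u 1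
noncomputable def mval (u : EuclideanSpace ℝ (Fin 2)) : ℝ := max (max (-(a1 u)) (-(a2 u))) (-(a3 u))

lemma a_sum (u : EuclideanSpace ℝ (Fin 2)) : a1 u + a2 u + a3 u = 0 := by
  unfold a1 a2 a3; ring

lemma le_mval1 (u : EuclideanSpace ℝ (Fin 2)) : -(a1 u) ≤ mval u :=
  (le_max_left _ _).trans (le_max_left _ _)
lemma le_mval2 (u : EuclideanSpace ℝ (Fin 2)) : -(a2 u) ≤ mval u :=
  (le_max_right _ _).trans (le_max_left _ _)
lemma le_mval3 (u : EuclideanSpace ℝ (Fin 2)) : -(a3 u) ≤ mval u := le_max_right _ _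

lemma mval_pos {u : EuclideanSpace ℝ (Fin 2)} (hu : ‖u‖ = 1) : 0 < mval u := by
  by_contra h
  push_neg at h
  have h1 : 0 ≤ a1 u := by linarith [le_mval1 u]
  have h2 : 0 ≤ a2 u := by linarith [le_mval2 u]
  have h3 : 0 ≤ a3 u := by linarith [le_mval3 u]
  have hs := a_sum u
  have e1 : a1 u = 0 := by linarith
  have e2 : a2 u = 0 := by linarith
  have e3 : a3 u = 0 := by linarith
  have hu0 : u 0 = 0 := e1
  have hu1 : u 1 = 0 := by
    have : sq3 * u 1 = 0 := by
      have := e2; have := e3; unfold a2 a3 at *; linarith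
    rcases mul_eq_zero.1 this with h' | h'
    · exact absurd h' sq3_pos.ne'
    · exact h'
  have : ‖u‖ = 0 := by rw [norm_eq2, hu0, hu1]; norm_num
  rw [hu] at this
  norm_num at this

noncomputable def Gmap0 (u : EuclideanSpace ℝ (Fin 2)) : ℕ → ℝ := fun v =>
  if v = 1 then (a1 u + mval u)/(3 * mval u)
  else if v = 2 then (a2 u + mval u)/(3 * mval u)
  else if v = 3 then (a3 u + mval u)/(3 * mval u)
  else 0

lemma mval_choice (u : EuclideanSpace ℝ (Fin 2)) :
    mval u = -(a1 u) ∨ mval u = -(a2 u) ∨ mval u = -(a3 u) := by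
  unfold mval
  rcases max_choice (max (-(a1 u)) (-(a2 u))) (-(a3 u)) with h | h
  · rcases max_choice (-(a1 u)) (-(a2 u)) with h' | h'
    · left; rw [h, h']
    · right; left; rw [h, h']
  · right; right; rw [h]

lemma Gmap0_mem {u : EuclideanSpace ℝ (Fin 2)} (hu : ‖u‖ = 1) : Gmap0 u ∈ Cset := by
  have hm := mval_pos hu
  have k1 := le_mval1 u
  have k2 := le_mval2 u
  have k3 := le_mval3 u
  refine ⟨fun v => ?_, ?_⟩
  · unfold Gmap0
    split_ifs
    · exact div_nonneg (by linarith) (by linarith)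
    · exact div_nonneg (by linarith) (by linarith)
    · exact div_nonneg (by linarith) (by linarith)
    · exact le_refl 0
  · have hsum := a_sum u
    rcases mval_choice u with h | h | h
    · refine ⟨{2,3}, by decide, fun v hv => ?_, ?_⟩
      · simp only [Finset.mem_insert, Finset.mem_singleton, not_or] at hv
        unfold Gmap0
        rcases hv with ⟨hv2, hv3⟩
        by_cases hv1 : v = 1
        · subst hv1
          simp only [if_pos rfl]
          rw [show a1 u + mval u = 0 by linarith]
          exact zero_div _
        · simp [hv1, hv2, hv3]
      · rw [Finset.sum_insert (by decide), Finset.sum_singleton]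
        unfold Gmap0
        norm_num
        field_simp
        linarith
    · refine ⟨{1,3}, by decide, fun v hv => ?_, ?_⟩
      · simp only [Finset.mem_insert, Finset.mem_singleton, not_or] at hv
        unfold Gmap0
        rcases hv with ⟨hv1, hv3⟩
        by_cases hv2 : v = 2
        · subst hv2
          simp only [if_neg (by norm_num : (2:ℕ) ≠ 1), if_pos rfl]
          rw [show a2 u + mval u = 0 by linarith]
          exact zero_div _
        · simp [hv1, hv2, hv3]
      · rw [Finset.sum_insert (by decide), Finset.sum_singleton]
        unfold Gmap0
        norm_num
        field_simp
        linarith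
    · refine ⟨{1,2}, by decide, fun v hv => ?_, ?_⟩
      · simp only [Finset.mem_insert, Finset.mem_singleton, not_or] at hv
        unfold Gmap0
        rcases hv with ⟨hv1, hv2⟩
        by_cases hv3 : v = 3
        · subst hv3
          simp only [if_neg (by norm_num : (3:ℕ) ≠ 1), if_neg (by norm_num : (3:ℕ) ≠ 2), if_pos rfl]
          rw [show a3 u + mval u = 0 by linarith]
          exact zero_div _
        · simp [hv1, hv2, hv3]
      · rw [Finset.sum_insert (by decide), Finset.sum_singleton]
        unfold Gmap0
        norm_num
        field_simp
        linarith

lemma GF {f : ℕ → ℝ} (hf : f ∈ Cset) : Gmap0 (Fmap0 f) = f := by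
  obtain ⟨hpos, hsum, hz, hsupp⟩ := C_props hf
  set c := ‖hmap f‖⁻¹ with hc
  have hcpos : 0 < c := inv_pos.2 (hmap_norm_pos hf)
  set u := Fmap0 f with huu
  have hu0 : u 0 = c * (f 1 - (f 2 + f 3)/2) := by
    have e : u 0 = c * (hmap f 0) := rfl
    rw [e, hmap_0]
  have hu1 : u 1 = c * ((sq3/2) * (f 2 - f 3)) := by
    have e : u 1 = c * (hmap f 1) := rfl
    rw [e, hmap_1]
  have ha1 : a1 u = c * (3 * f 1 - 1)/2 := by
    show u 0 = _
    rw [hu0]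
    linear_combination (-(c/2)) * hsum
  have ha2 : a2 u = c * (3 * f 2 - 1)/2 := by
    show -(u 0)/2 + (sq3/2) * u 1 = _
    rw [hu0, hu1]
    linear_combination (c * (f 2 - f 3)/4) * sq3_sq - (c/2) * hsum
  have ha3 : a3 u = c * (3 * f 3 - 1)/2 := by
    show -(u 0)/2 - (sq3/2) * u 1 = _
    rw [hu0, hu1]
    linear_combination (-(c * (f 2 - f 3)/4)) * sq3_sq - (c/2) * hsum
  have hm : mval u = c/2 := by
    apply le_antisymm
    · refine max_le (max_le ?_ ?_) ?_
      · rw [ha1]; nlinarith [hpos 1]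
      · rw [ha2]; nlinarith [hpos 2]
      · rw [ha3]; nlinarith [hpos 3]
    · rcases hz with h | h | h
      · calc c/2 = -(a1 u) := by rw [ha1, h]; ring
          _ ≤ mval u := le_mval1 u
      · calc c/2 = -(a2 u) := by rw [ha2, h]; ring
          _ ≤ mval u := le_mval2 u
      · calc c/2 = -(a3 u) := by rw [ha3, h]; ring
          _ ≤ mval u := le_mval3 u
  funext v
  by_cases h1 : v = 1
  · subst h1
    show (a1 u + mval u)/(3 * mval u) = f 1
    rw [ha1, hm]
    field_simp
    ring
  by_cases h2 : v = 2
  · subst h2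
    show (a2 u + mval u)/(3 * mval u) = f 2
    rw [ha2, hm]
    field_simp
    ring
  by_cases h3 : v = 3
  · subst h3
    show (a3 u + mval u)/(3 * mval u) = f 3
    rw [ha3, hm]
    field_simp
    ring
  · have hv : f v = 0 := by
      refine hsupp v ?_
      simp only [Finset.mem_insert, Finset.mem_singleton, not_or]
      exact ⟨h1, h2, h3⟩
    rw [hv]
    show Gmap0 u v = 0
    simp [Gmap0, h1, h2, h3]

lemma FG {u : EuclideanSpace ℝ (Fin 2)} (hu : ‖u‖ = 1) : Fmap0 (Gmap0 u) = u := by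
  have hm := mval_pos hu
  have hsum := a_sum u
  have g1 : Gmap0 u 1 = (a1 u + mval u)/(3 * mval u) := rfl
  have g2 : Gmap0 u 2 = (a2 u + mval u)/(3 * mval u) := rfl
  have g3 : Gmap0 u 3 = (a3 u + mval u)/(3 * mval u) := rfl
  have h0 : hmap (Gmap0 u) 0 = u 0 / (2 * mval u) := by
    rw [hmap_0, g1, g2, g3]
    have e1 : a1 u = u 0 := rfl
    field_simp
    linear_combination (-1) * hsum + 3 * e1
  have h1 : hmap (Gmap0 u) 1 = u 1 / (2 * mval u) := by
    rw [hmap_1, g2, g3]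
    have e23 : a2 u - a3 u = sq3 * u 1 := by
      show (-(u 0)/2 + (sq3/2) * u 1) - (-(u 0)/2 - (sq3/2) * u 1) = _
      ring
    field_simp
    linear_combination sq3 * e23 + (u 1) * sq3_sq
  have heq : hmap (Gmap0 u) = (2 * mval u)⁻¹ • u := by
    ext i
    fin_cases i
    · show hmap (Gmap0 u) 0 = (2 * mval u)⁻¹ * u 0
      rw [h0]; ring
    · show hmap (Gmap0 u) 1 = (2 * mval u)⁻¹ * u 1
      rw [h1]; ring
  have hnorm : ‖hmap (Gmap0 u)‖ = (2 * mval u)⁻¹ := by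
    rw [heq, norm_smul, hu, mul_one, Real.norm_eq_abs, abs_of_pos (inv_pos.2 (by linarith))]
  rw [Fmap0, hnorm, heq, inv_inv, smul_smul, mul_inv_cancel₀ (by linarith : (2:ℝ) * mval u ≠ 0), one_smul]

lemma hmap_cont : Continuous hmap := by
  refine ((EuclideanSpace.equiv (Fin 2) ℝ).symm.continuous).comp ?_
  refine continuous_pi fun i => ?_
  fin_cases i
  · simp only [Matrix.cons_val_zero]
    exact (continuous_apply 1).sub (((continuous_apply 2).add (continuous_apply 3)).div_const 2)
  · simp only [Matrix.cons_val_one, Matrix.head_cons]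
    exact continuous_const.mul ((continuous_apply 2).sub (continuous_apply 3))

lemma coord_cont (i : Fin 2) : Continuous (fun u : EuclideanSpace ℝ (Fin 2) => u i) :=
  (continuous_apply i).comp (EuclideanSpace.equiv (Fin 2) ℝ).continuous

noncomputable def heqB : ↥Cset ≃ₜ ↥(Metric.sphere (0 : EuclideanSpace ℝ (Fin 2)) 1) where
  toFun f := ⟨Fmap0 f.1, Fmap0_mem f.2⟩
  invFun x := ⟨Gmap0 x.1, Gmap0_mem (mem_sphere_zero_iff_norm.1 x.2)⟩
  left_inv f := Subtype.ext (GF f.2)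
  right_inv x := Subtype.ext (FG (mem_sphere_zero_iff_norm.1 x.2))
  continuous_toFun := by
    have hv : Continuous (fun f : ↥Cset => hmap f.1) := hmap_cont.comp continuous_subtype_val
    refine Continuous.subtype_mk ?_ _
    exact Continuous.smul ((continuous_norm.comp hv).inv₀
      (fun x => (hmap_norm_pos x.2).ne')) hv
  continuous_invFun := by
    have hnorm : ∀ x : ↥(Metric.sphere (0 : EuclideanSpace ℝ (Fin 2)) 1), ‖(x : EuclideanSpace ℝ (Fin 2))‖ = 1 :=
      fun x => mem_sphere_zero_iff_norm.1 x.2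
    have hval : Continuous (fun x : ↥(Metric.sphere (0 : EuclideanSpace ℝ (Fin 2)) 1) =>
        (x : EuclideanSpace ℝ (Fin 2))) := continuous_subtype_val
    have ca1 : Continuous (fun x : ↥(Metric.sphere (0 : EuclideanSpace ℝ (Fin 2)) 1) => a1 x.1) :=
      (coord_cont 0).comp hval
    have ca2 : Continuous (fun x : ↥(Metric.sphere (0 : EuclideanSpace ℝ (Fin 2)) 1) => a2 x.1) := by
      unfold a2
      exact (((coord_cont 0).comp hval).neg.div_const 2).add
        (continuous_const.mul ((coord_cont 1).comp hval))
    have ca3 : Continuous (fun x : ↥(Metric.sphere (0 : EuclideanSpace ℝ (Fin 2)) 1) => a3 x.1) := by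
      unfold a3
      exact (((coord_cont 0).comp hval).neg.div_const 2).sub
        (continuous_const.mul ((coord_cont 1).comp hval))
    have cm : Continuous (fun x : ↥(Metric.sphere (0 : EuclideanSpace ℝ (Fin 2)) 1) => mval x.1) := by
      unfold mval
      exact (ca1.neg.max ca2.neg).max ca3.neg
    have cmne : ∀ x : ↥(Metric.sphere (0 : EuclideanSpace ℝ (Fin 2)) 1), 3 * mval x.1 ≠ 0 :=
      fun x => by have := mval_pos (hnorm x); positivity
    refine Continuous.subtype_mk (continuous_pi fun v => ?_) _
    show Continuous (fun x : ↥(Metric.sphere (0 : EuclideanSpace ℝ (Fin 2)) 1) => Gmap0 x.1 v)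
    unfold Gmap0
    by_cases h1 : v = 1
    · subst h1
      simp only [if_pos rfl]
      exact (ca1.add cm).div (continuous_const.mul cm) cmne
    by_cases h2 : v = 2
    · subst h2
      simp only [if_neg (by norm_num : (2:ℕ) ≠ 1), if_pos rfl]
      exact (ca2.add cm).div (continuous_const.mul cm) cmne
    by_cases h3 : v = 3
    · subst h3
      simp only [if_neg (by norm_num : (3:ℕ) ≠ 1), if_neg (by norm_num : (3:ℕ) ≠ 2), if_pos rfl]
      exact (ca3.add cm).div (continuous_const.mul cm) cmne
    · simp only [if_neg h1, if_neg h2, if_neg h3]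
      exact continuous_const

theorem topPart : Nonempty (ContinuousMap.HomotopyEquiv ↥(L.realization)
    ↥(Metric.sphere (0 : EuclideanSpace ℝ (Fin 2)) 1)) :=
  ⟨heqA.trans heqB.toHomotopyEquiv⟩

theorem stmt9 :
    (Kpaper.full {1,2,3,4}).MF = ({{1,2,3},{1,3,4}} : Set (Finset ℕ)) ∧
    Nonempty (ContinuousMap.HomotopyEquiv ↥((Kpaper.full {1,2,3,4}).realization)
      ↥(Metric.sphere (0 : EuclideanSpace ℝ (Fin 2)) 1)) ∧
    Nonempty ((Kpaper.full {1,2,3,4}).reducedCohomology 1 ≃ₗ[ℤ] ℤ) ∧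
    Subsingleton ((Kpaper.full {1,2,3,4}).reducedCohomology 0) :=
  ⟨mf_full, topPart, coh1, coh0⟩

end StmtNine
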